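/- Let D ∈ ℝ^{mn×mn} be the block matrix with n×n diagonal blocks D_{ii} = G_i + (m−1)·I_n and off-diagonal blocks D_{ij} = −I_n for i ≠ j, where each G_i is a diagonal matrix with nonnegative entries. Then D is symmetric positive semidefinite. If moreover for every diagonal position j ∈ {1,…,n} there exists i with the j-th diagonal entry of G_i strictly positive, then D is positive definite. -/

import Mathlib

open Matrix BigOperators

lemma blockD_quad_eq {m : ℕ} (c y : Fin m → ℝ) :
    ∑ i, y i * ∑ j, (if i = j then c i + ((m : ℝ) - 1) else -1) * y j
      = ∑ i, c i * y i ^ 2 + (2⁻¹ : ℝ) * ∑ i, ∑ j, (y i - y j) ^ 2 := by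
  have h1 : ∀ i : Fin m, ∑ j, (if i = j then c i + ((m : ℝ) - 1) else -1) * y j
      = ((c i + (m : ℝ)) * y i - ∑ j, y j) := by
    intro i
    have : ∀ j : Fin m, (if i = j then c i + ((m : ℝ) - 1) else -1) * y j
        = (if i = j then (c i + (m : ℝ)) * y i else 0) - y j := by
      intro j; by_cases h : i = j <;> simp [h] <;> ring
    rw [Finset.sum_congr rfl fun j _ => this j, Finset.sum_sub_distrib,
      Finset.sum_ite_eq Finset.univ i (fun _ => (c i + (m : ℝ)) * y i)]
    simp
  have h2 : ∑ i, ∑ j, (y i - y j) ^ 2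
      = 2 * ((m : ℝ) * ∑ i, y i ^ 2 - (∑ i, y i) ^ 2) := by
    have e : ∀ i j : Fin m, (y i - y j) ^ 2 = y i ^ 2 + y j ^ 2 - 2 * (y i * y j) := by
      intro i j; ring
    have : ∀ i : Fin m, ∑ j, (y i - y j) ^ 2
        = (m : ℝ) * y i ^ 2 + (∑ j, y j ^ 2) - 2 * (y i * ∑ j, y j) := by
      intro i
      rw [Finset.sum_congr rfl fun j _ => e i j, Finset.sum_sub_distrib,
        Finset.sum_add_distrib, Finset.sum_const, Finset.card_univ, Fintype.card_fin,
        ← Finset.mul_sum, ← Finset.mul_sum]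
      push_cast; ring
    rw [Finset.sum_congr rfl fun i _ => this i, Finset.sum_sub_distrib,
      Finset.sum_add_distrib, Finset.sum_const, Finset.card_univ, Fintype.card_fin,
      ← Finset.mul_sum]
    have e2 : ∀ x : Fin m, 2 * (y x * ∑ j, y j) = (2 * ∑ j, y j) * y x := fun x => by ring
    have hs : ∑ x : Fin m, 2 * (y x * ∑ j, y j) = 2 * ((∑ j, y j) * (∑ j, y j)) := by
      rw [Finset.sum_congr rfl fun x _ => e2 x, ← Finset.mul_sum]
      ring
    rw [hs, nsmul_eq_mul]
    push_cast; ring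
  have h3 : ∑ i, y i * ((c i + (m : ℝ)) * y i - ∑ j, y j)
      = ∑ i, c i * y i ^ 2 + (m : ℝ) * ∑ i, y i ^ 2 - (∑ i, y i) ^ 2 := by
    have : ∀ i : Fin m, y i * ((c i + (m : ℝ)) * y i - ∑ j, y j)
        = c i * y i ^ 2 + (m : ℝ) * y i ^ 2 - y i * ∑ j, y j := by
      intro i; ring
    rw [Finset.sum_congr rfl fun i _ => this i, Finset.sum_sub_distrib,
      Finset.sum_add_distrib, ← Finset.mul_sum, ← Finset.sum_mul]
    ring
  rw [Finset.sum_congr rfl fun i _ => by rw [h1 i], h3, h2]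
  ring

theorem blockD_posdef
    {n m : ℕ}
    (G : Fin m → Fin n → ℝ)
    (hG : ∀ i a, 0 ≤ G i a)
    (D : Matrix (Fin m × Fin n) (Fin m × Fin n) ℝ)
    (hD : ∀ i j a b, D (i, a) (j, b) =
      if a = b then (if i = j then G i a + ((m : ℝ) - 1) else -1) else 0) :
    D.PosSemidef ∧ ((∀ a : Fin n, ∃ i : Fin m, 0 < G i a) → D.PosDef) := by
  -- quadratic form decomposition
  have hQ : ∀ x : Fin m × Fin n → ℝ,
      dotProduct (star x) (D *ᵥ x) =
        ∑ a : Fin n, (∑ i, G i a * x (i, a) ^ 2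
          + (2⁻¹ : ℝ) * ∑ i, ∑ j, (x (i, a) - x (j, a)) ^ 2) := by
    intro x
    have hmv : ∀ p : Fin m × Fin n, (D *ᵥ x) p
        = ∑ j, (if p.1 = j then G p.1 p.2 + ((m : ℝ) - 1) else -1) * x (j, p.2) := by
      rintro ⟨i, a⟩
      rw [mulVec, dotProduct]
      rw [Fintype.sum_prod_type]
      have : ∀ j : Fin m, ∑ b : Fin n, D (i, a) (j, b) * x (j, b)
          = (if i = j then G i a + ((m : ℝ) - 1) else -1) * x (j, a) := by
        intro j
        have : ∀ b : Fin n, D (i, a) (j, b) * x (j, b)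
            = if a = b then (if i = j then G i a + ((m : ℝ) - 1) else -1) * x (j, b) else 0 := by
          intro b; rw [hD]; by_cases h : a = b <;> simp [h]
        rw [Finset.sum_congr rfl fun b _ => this b, Finset.sum_ite_eq Finset.univ a]
        simp
      exact Finset.sum_congr rfl fun j _ => this j
    have hst : star x = x := rfl
    rw [hst, dotProduct, Fintype.sum_prod_type, Finset.sum_comm]
    refine Finset.sum_congr rfl fun a _ => ?_
    have : ∀ i : Fin m, x (i, a) * (D *ᵥ x) (i, a)
        = x (i, a) * ∑ j, (if i = j then G i a + ((m : ℝ) - 1) else -1) * x (j, a) := by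
      intro i; rw [hmv (i, a)]
    rw [Finset.sum_congr rfl fun i _ => this i,
      blockD_quad_eq (fun i => G i a) (fun i => x (i, a))]
  have herm : D.IsHermitian := by
    ext ⟨i, a⟩ ⟨j, b⟩
    simp only [conjTranspose_apply, star_trivial]
    rw [hD, hD]
    by_cases hab : a = b
    · subst hab
      by_cases hij : i = j
      · subst hij; simp
      · simp [hij, Ne.symm hij]
    · simp [hab, Ne.symm hab]
  have hterm_nonneg : ∀ (x : Fin m × Fin n → ℝ) (a : Fin n),
      0 ≤ ∑ i, G i a * x (i, a) ^ 2
        + (2⁻¹ : ℝ) * ∑ i, ∑ j, (x (i, a) - x (j, a)) ^ 2 := by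
    intro x a
    have h1 : 0 ≤ ∑ i, G i a * x (i, a) ^ 2 :=
      Finset.sum_nonneg fun i _ => mul_nonneg (hG i a) (sq_nonneg _)
    have h2 : 0 ≤ ∑ i, ∑ j : Fin m, (x (i, a) - x (j, a)) ^ 2 :=
      Finset.sum_nonneg fun i _ => Finset.sum_nonneg fun j _ => sq_nonneg _
    positivity
  have hnonneg : ∀ x : Fin m × Fin n → ℝ, 0 ≤ dotProduct (star x) (D *ᵥ x) := by
    intro x
    rw [hQ]
    exact Finset.sum_nonneg fun a _ => hterm_nonneg x a
  refine ⟨PosSemidef.of_dotProduct_mulVec_nonneg herm hnonneg, fun hpos =>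
    PosDef.of_dotProduct_mulVec_pos herm fun x hx => ?_⟩
  rcases lt_or_eq_of_le (hnonneg x) with h | h
  · exact h
  exfalso
  apply hx
  rw [hQ] at h
  have hzero : ∀ a ∈ Finset.univ, (∑ i, G i a * x (i, a) ^ 2
      + (2⁻¹ : ℝ) * ∑ i, ∑ j, (x (i, a) - x (j, a)) ^ 2) = 0 :=
    (Finset.sum_eq_zero_iff_of_nonneg fun a _ => hterm_nonneg x a).1 h.symm
  funext p
  obtain ⟨i, a⟩ := p
  have hza := hzero a (Finset.mem_univ a)
  have h1 : 0 ≤ ∑ i, G i a * x (i, a) ^ 2 :=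
    Finset.sum_nonneg fun i _ => mul_nonneg (hG i a) (sq_nonneg _)
  have h2 : 0 ≤ (2⁻¹ : ℝ) * ∑ i, ∑ j, (x (i, a) - x (j, a)) ^ 2 := by
    have : 0 ≤ ∑ i, ∑ j : Fin m, (x (i, a) - x (j, a)) ^ 2 :=
      Finset.sum_nonneg fun i _ => Finset.sum_nonneg fun j _ => sq_nonneg _
    positivity
  have hA : ∑ i, G i a * x (i, a) ^ 2 = 0 := le_antisymm (by linarith) h1
  have hB : ∑ i, ∑ j : Fin m, (x (i, a) - x (j, a)) ^ 2 = 0 := by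
    have := le_antisymm (by linarith) h2
    have h2' : (2⁻¹ : ℝ) ≠ 0 := by norm_num
    field_simp at this
    linarith [this]
  obtain ⟨i0, hi0⟩ := hpos a
  have hAi : ∀ i ∈ Finset.univ, G i a * x (i, a) ^ 2 = 0 :=
    (Finset.sum_eq_zero_iff_of_nonneg fun i _ => mul_nonneg (hG i a) (sq_nonneg _)).1 hA
  have hx0 : x (i0, a) = 0 := by
    have := hAi i0 (Finset.mem_univ i0)
    rcases mul_eq_zero.1 this with h' | h'
    · exact absurd h' (ne_of_gt hi0)
    · exact sq_eq_zero_iff.mp h'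
  have hBij : ∀ i ∈ Finset.univ, ∑ j : Fin m, (x (i, a) - x (j, a)) ^ 2 = 0 :=
    (Finset.sum_eq_zero_iff_of_nonneg fun i _ =>
      Finset.sum_nonneg fun j _ => sq_nonneg _).1 hB
  have hBi : ∀ j ∈ Finset.univ, (x (i, a) - x (j, a)) ^ 2 = 0 :=
    (Finset.sum_eq_zero_iff_of_nonneg fun j _ => sq_nonneg _).1 (hBij i (Finset.mem_univ i))
  have := hBi i0 (Finset.mem_univ i0)
  have heq : x (i, a) = x (i0, a) := by nlinarith [sq_nonneg (x (i, a) - x (i0, a))]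
  simp [heq, hx0]
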